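/- Let A : X → Y and B : Y → X be bounded operators, λ ∈ ρ(AB)∖{0}, and μ ∈ ρ(BA). Then (BA − λ)^{-1} = λ^{-1}(μ·I + (λ − μ)·B(AB − λ)^{-1}A)(BA − μ)^{-1}. -/

import Mathlib

open ContinuousLinearMap

/-- For bounded operators `A, B`, `λ ∈ ρ(AB) \ {0}` and `μ ∈ ρ(BA)`,
`(BA - λ)⁻¹ = λ⁻¹ (μ I + (λ - μ) B (AB - λ)⁻¹ A)(BA - μ)⁻¹`. -/
theorem stmt5 {X Y : Type*} [NormedAddCommGroup X] [NormedSpace ℂ X] [CompleteSpace X]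
    [NormedAddCommGroup Y] [NormedSpace ℂ Y] [CompleteSpace Y]
    (A : X →L[ℂ] Y) (B : Y →L[ℂ] X) (l μ : ℂ) (hl : l ≠ 0)
    (hlr : l ∈ resolventSet ℂ (A.comp B)) (hμ : μ ∈ resolventSet ℂ (B.comp A)) :
    Ring.inverse (B.comp A - l • (1 : X →L[ℂ] X)) =
      l⁻¹ • ((μ • (1 : X →L[ℂ] X) +
          (l - μ) • ((B.comp (Ring.inverse (A.comp B - l • (1 : Y →L[ℂ] Y)))).comp A)).comp
        (Ring.inverse (B.comp A - μ • (1 : X →L[ℂ] X)))) := by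
  rw [resolventSet] at hlr hμ
  simp only [Set.mem_setOf_eq, Algebra.algebraMap_eq_smul_one] at hlr hμ
  have hS : IsUnit (A.comp B - l • (1 : Y →L[ℂ] Y)) := by simpa using hlr.neg
  have hT : IsUnit (B.comp A - μ • (1 : X →L[ℂ] X)) := by simpa using hμ.neg
  set s := Ring.inverse (A.comp B - l • (1 : Y →L[ℂ] Y)) with hs
  set r := Ring.inverse (B.comp A - μ • (1 : X →L[ℂ] X)) with hr
  have hS1 : (A.comp B - l • (1 : Y →L[ℂ] Y)) * s = 1 := Ring.mul_inverse_cancel _ hS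
  have hS2 : s * (A.comp B - l • (1 : Y →L[ℂ] Y)) = 1 := Ring.inverse_mul_cancel _ hS
  have hT1 : (B.comp A - μ • (1 : X →L[ℂ] X)) * r = 1 := Ring.mul_inverse_cancel _ hT
  have hS1' : (A.comp B).comp s = 1 + l • s := by
    rw [sub_mul, smul_mul_assoc, one_mul, sub_eq_iff_eq_add] at hS1
    exact hS1
  have hS2' : s.comp (A.comp B) = 1 + l • s := by
    rw [mul_sub, mul_smul_comm, mul_one, sub_eq_iff_eq_add] at hS2
    exact hS2
  -- the two mixed-space product identities
  have h1 : (B.comp A).comp ((B.comp s).comp A) = B.comp A + l • ((B.comp s).comp A) := by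
    have e : (B.comp A).comp ((B.comp s).comp A) = B.comp (((A.comp B).comp s).comp A) := by
      ext x; rfl
    rw [e, hS1', add_comp, one_def, id_comp, smul_comp, comp_add, comp_smul, comp_assoc]
  have h2 : ((B.comp s).comp A).comp (B.comp A) = B.comp A + l • ((B.comp s).comp A) := by
    have e : ((B.comp s).comp A).comp (B.comp A) = B.comp ((s.comp (A.comp B)).comp A) := by
      ext x; rfl
    rw [e, hS2', add_comp, one_def, id_comp, smul_comp, comp_add, comp_smul, comp_assoc]
  set M : X →L[ℂ] X := l⁻¹ • ((B.comp s).comp A - 1) with hM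
  have hinv1 : (B.comp A - l • (1 : X →L[ℂ] X)).comp M = 1 := by
    rw [hM, comp_smul, comp_sub, sub_comp, sub_comp, smul_comp, h1,
      one_def, id_comp, comp_id, comp_id]
    match_scalars <;> field_simp <;> ring
  have hinv2 : M.comp (B.comp A - l • (1 : X →L[ℂ] X)) = 1 := by
    simp only [hM, smul_comp, sub_comp, comp_sub, comp_smul, one_def, id_comp, comp_id]
    rw [h2]
    match_scalars <;> field_simp <;> ring
  have hlhs : Ring.inverse (B.comp A - l • (1 : X →L[ℂ] X)) = M := by
    have hu : IsUnit (B.comp A - l • (1 : X →L[ℂ] X)) :=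
      ⟨⟨_, M, hinv1, hinv2⟩, rfl⟩
    rcases hu with ⟨u, hu⟩
    rw [← hu, Ring.inverse_unit]
    have : (u : X →L[ℂ] X) * M = 1 := by rw [hu]; exact hinv1
    calc (↑u⁻¹ : X →L[ℂ] X) = ↑u⁻¹ * (↑u * M) := by rw [this, mul_one]
      _ = M := by rw [← mul_assoc, u.inv_mul, one_mul]
  have key : μ • (1 : X →L[ℂ] X) + (l - μ) • ((B.comp s).comp A) =
      ((B.comp s).comp A - 1).comp (B.comp A - μ • (1 : X →L[ℂ] X)) := by
    rw [comp_sub, sub_comp, sub_comp, comp_smul, comp_smul, h2,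
      one_def, id_comp, comp_id, comp_id]
    match_scalars <;> ring
  rw [hlhs, key]
  rw [show ((B.comp s).comp A - 1).comp (B.comp A - μ • (1 : X →L[ℂ] X)) ∘L r
      = ((B.comp s).comp A - 1).comp ((B.comp A - μ • (1 : X →L[ℂ] X)) ∘L r) from rfl]
  rw [show (B.comp A - μ • (1 : X →L[ℂ] X)) ∘L r = 1 from hT1, hM,
    one_def, comp_id]
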